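/- Let ε, κ̄, u^s, u^r, f^s, f^l : ℝ³ → ℝ with ε and u^s, u^r twice continuously differentiable. Suppose that (i) −∇·(ε∇(u^s + u^r)) + κ̄² sinh(u^s + u^r) = f^s + f^l holds pointwise on ℝ³, (ii) −∇·(ε∇u^s) = f^s holds pointwise on ℝ³, and (iii) κ̄(x)·u^s(x) = 0 for every x ∈ ℝ³. Then the long-range component satisfies the nonlinear regularized Poisson–Boltzmann equation −∇·(ε∇u^r) + κ̄² sinh(u^r) = f^l pointwise on ℝ³. -/

import Mathlib

/-- Partial derivative of a scalar function on ℝ³ along the ℓ-th coordinate. -/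
noncomputable def pderiv3 (ℓ : Fin 3) (f : EuclideanSpace ℝ (Fin 3) → ℝ)
    (x : EuclideanSpace ℝ (Fin 3)) : ℝ :=
  fderiv ℝ f x (EuclideanSpace.single ℓ (1 : ℝ))

/-- `∇·(ε∇v)(x) = Σ_{ℓ=1}^{3} ∂/∂x_ℓ (ε·∂v/∂x_ℓ)(x)`. -/
noncomputable def divEpsGrad (ε v : EuclideanSpace ℝ (Fin 3) → ℝ)
    (x : EuclideanSpace ℝ (Fin 3)) : ℝ :=
  ∑ ℓ : Fin 3, pderiv3 ℓ (fun y => ε y * pderiv3 ℓ v y) x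

lemma pderiv3_contDiff {ℓ : Fin 3} {f : EuclideanSpace ℝ (Fin 3) → ℝ}
    (hf : ContDiff ℝ 2 f) : ContDiff ℝ 1 (pderiv3 ℓ f) := by
  have h1 : ContDiff ℝ 1 (fderiv ℝ f) := hf.fderiv_right (by norm_num)
  exact h1.clm_apply contDiff_const

lemma divEpsGrad_add (ε us ur : EuclideanSpace ℝ (Fin 3) → ℝ)
    (hε : ContDiff ℝ 2 ε) (hus : ContDiff ℝ 2 us) (hur : ContDiff ℝ 2 ur)
    (x : EuclideanSpace ℝ (Fin 3)) :
    divEpsGrad ε (fun y => us y + ur y) x = divEpsGrad ε us x + divEpsGrad ε ur x := by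
  unfold divEpsGrad
  rw [← Finset.sum_add_distrib]
  refine Finset.sum_congr rfl fun ℓ _ => ?_
  have hps : ContDiff ℝ 1 (fun y => ε y * pderiv3 ℓ us y) :=
    (hε.of_le one_le_two).mul (pderiv3_contDiff hus)
  have hpr : ContDiff ℝ 1 (fun y => ε y * pderiv3 ℓ ur y) :=
    (hε.of_le one_le_two).mul (pderiv3_contDiff hur)
  have hsum : (fun y => ε y * pderiv3 ℓ (fun z => us z + ur z) y)
      = fun y => ε y * pderiv3 ℓ us y + ε y * pderiv3 ℓ ur y := by
    funext y
    have : pderiv3 ℓ (fun z => us z + ur z) y = pderiv3 ℓ us y + pderiv3 ℓ ur y := by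
      unfold pderiv3
      rw [fderiv_fun_add (hus.differentiable two_ne_zero y) (hur.differentiable two_ne_zero y)]
      simp
    rw [this]; ring
  rw [hsum]
  unfold pderiv3
  unfold pderiv3 at hps hpr
  rw [fderiv_fun_add (hps.differentiable one_ne_zero x) (hpr.differentiable one_ne_zero x)]
  simp [pderiv3]

/-- Derivation of the nonlinear regularized Poisson–Boltzmann equation: if
`−∇·(ε∇(u^s+u^r)) + κ̄² sinh(u^s+u^r) = f^s + f^l`, the short-range potential solves
`−∇·(ε∇u^s) = f^s`, and `κ̄·u^s = 0` pointwise, then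
`−∇·(ε∇u^r) + κ̄² sinh(u^r) = f^l` pointwise on ℝ³. -/
theorem nrpbe_derivation (ε κ us ur fs fl : EuclideanSpace ℝ (Fin 3) → ℝ)
    (hε : ContDiff ℝ 2 ε) (hus : ContDiff ℝ 2 us) (hur : ContDiff ℝ 2 ur)
    (hfull : ∀ x, -divEpsGrad ε (fun y => us y + ur y) x
        + (κ x) ^ 2 * Real.sinh (us x + ur x) = fs x + fl x)
    (hshort : ∀ x, -divEpsGrad ε us x = fs x)
    (hvanish : ∀ x, κ x * us x = 0) :
    ∀ x, -divEpsGrad ε ur x + (κ x) ^ 2 * Real.sinh (ur x) = fl x := by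
  intro x
  have hadd := divEpsGrad_add ε us ur hε hus hur x
  have hsinh : (κ x) ^ 2 * Real.sinh (us x + ur x) = (κ x) ^ 2 * Real.sinh (ur x) := by
    rcases mul_eq_zero.1 (hvanish x) with h | h
    · simp [h]
    · simp [h]
  have := hfull x
  rw [hadd, hsinh] at this
  have hs := hshort x
  linarith
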